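/- Suppose u : ℝ → ℝ^M is continuous, x : ℝ → ℝ^N satisfies, for every t ∈ ℝ, that x has derivative A.mulVec (x t) + B.mulVec (u t) at t, and the initial condition lies on the group-consensus subspace: x 0 ∈ X_or. Then x t ∈ X_or for every t ∈ ℝ. In particular, no state with nonzero component orthogonal to X_or is reachable from an initial condition in X_or, whatever the control input. -/

import Mathlib

open Matrix

/-- The `N × N` permutation matrix of a permutation `σ` of `Fin N`, with the convention
`(permMat N σ).mulVec x i = x (σ⁻¹ i)`. -/
def permMat (N : ℕ) (σ : Equiv.Perm (Fin N)) : Matrix (Fin N) (Fin N) ℝ :=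
  Matrix.of fun i j => if σ j = i then (1 : ℝ) else 0

/-- The group-consensus subspace: vectors that are constant on each orbit of the natural
action of the subgroup `G` of permutations of `Fin N`. -/
def consensusSet (N : ℕ) (G : Subgroup (Equiv.Perm (Fin N))) : Set (Fin N → ℝ) :=
  {x | ∀ i j : Fin N, (∃ σ ∈ G, σ i = j) → x i = x j}

lemma permMat_mulVec (N : ℕ) (σ : Equiv.Perm (Fin N)) (v : Fin N → ℝ) (i : Fin N) :
    (permMat N σ).mulVec v i = v (σ⁻¹ i) := by
  simp only [permMat, Matrix.mulVec, dotProduct, Matrix.of_apply]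
  rw [Finset.sum_eq_single (σ⁻¹ i)]
  · simp
  · intro j _ hj
    rw [if_neg, zero_mul]
    intro h; exact hj (by simp [← h])
  · simp

/-- If `u` is continuous, `x` solves `ẋ = Ax + Bu` on all of `ℝ`, and `x 0 ∈ X_or`, then
`x t ∈ X_or` for every `t`: no state with nonzero component orthogonal to `X_or` is reachable
from an initial condition in `X_or`, whatever the control input. -/
theorem trajectory_stays_in_consensus (N M : ℕ) (A : Matrix (Fin N) (Fin N) ℝ)
    (B : Matrix (Fin N) (Fin M) ℝ) (G : Subgroup (Equiv.Perm (Fin N)))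
    (hA : ∀ σ ∈ G, permMat N σ * A = A * permMat N σ)
    (hB : ∀ σ ∈ G, permMat N σ * B = B)
    (u : ℝ → Fin M → ℝ) (hu : Continuous u)
    (x : ℝ → Fin N → ℝ)
    (hx : ∀ t : ℝ, HasDerivAt x (A.mulVec (x t) + B.mulVec (u t)) t)
    (hx0 : x 0 ∈ consensusSet N G) :
    ∀ t : ℝ, x t ∈ consensusSet N G := by
  -- key: for each σ ∈ G, permMat N σ |>.mulVec (x t) = x t
  have key : ∀ σ ∈ G, ∀ t : ℝ, (permMat N σ).mulVec (x t) = x t := by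
    intro σ hσ t
    set P := permMat N σ with hP
    -- continuous linear maps
    let Lc : (Fin N → ℝ) →L[ℝ] (Fin N → ℝ) := Matrix.mulVecLin A |>.toContinuousLinearMap
    let Pc : (Fin N → ℝ) →L[ℝ] (Fin N → ℝ) := Matrix.mulVecLin P |>.toContinuousLinearMap
    have hLc : ∀ y, Lc y = A.mulVec y := fun y => rfl
    have hPc : ∀ y, Pc y = P.mulVec y := fun y => rfl
    set v : ℝ → (Fin N → ℝ) → (Fin N → ℝ) := fun t y => A.mulVec y + B.mulVec (u t) with hv
    have hlip : ∀ s : ℝ, LipschitzWith ‖Lc‖₊ (v s) := by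
      intro s
      apply LipschitzWith.of_dist_le_mul
      intro y z
      have := Lc.lipschitz.dist_le_mul y z
      simpa [hv, dist_add_right, hLc] using this
    -- y := P ∘ x solves same ODE
    have hy : ∀ s : ℝ, HasDerivAt (fun s => P.mulVec (x s)) (v s (P.mulVec (x s))) s := by
      intro s
      have h1 : HasDerivAt (fun s => P.mulVec (x s)) (P.mulVec (v s (x s))) s := by
        have := (Pc.hasFDerivAt.comp_hasDerivAt s (hx s))
        simpa [hPc, hv, Function.comp_def] using this
      convert h1 using 1
      have hAB : P.mulVec (v s (x s)) = A.mulVec (P.mulVec (x s)) + B.mulVec (u s) := by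
        rw [hv]
        simp only [Matrix.mulVec_add]
        rw [Matrix.mulVec_mulVec, Matrix.mulVec_mulVec, hA σ hσ, hB σ hσ,
          ← Matrix.mulVec_mulVec]
      rw [hv]; rw [hAB]
    have h0 : P.mulVec (x 0) = x 0 := by
      funext i
      rw [permMat_mulVec]
      exact hx0 (σ⁻¹ i) i ⟨σ, hσ, by simp⟩
    -- uniqueness on Ioo (-(|t|+1)) (|t|+1)
    have ht0 : (0:ℝ) ∈ Set.Ioo (-(|t|+1)) (|t|+1) := by
      constructor <;> nlinarith [abs_nonneg t]
    have htt : t ∈ Set.Ioo (-(|t|+1)) (|t|+1) := by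
      constructor <;> nlinarith [le_abs_self t, neg_abs_le t]
    have := ODE_solution_unique_of_mem_Ioo (K := ‖Lc‖₊) (s := fun _ => Set.univ)
      (fun s _ => (hlip s).lipschitzOnWith) ht0
      (f := fun s => P.mulVec (x s)) (g := x)
      (fun s _ => ⟨hy s, trivial⟩)
      (fun s _ => ⟨hx s, trivial⟩)
      h0
    exact this htt
  intro t i j ⟨σ, hσ, hij⟩
  have := congrFun (key σ hσ t) j
  rw [permMat_mulVec] at this
  rw [← this, ← hij, ← Equiv.Perm.mul_apply, inv_mul_cancel, Equiv.Perm.one_apply]
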